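/- Commute cost formula: for an irreducible finite Markov chain, vertices a ≠ b, and any cost function k on directed edges, the expected commute cost K^k_{ab} = H^k_{ab} + H^k_{ba} satisfies K^k_{ab} = R^eff_{ab} · D^k, where H^k_{xb} = E_x Σ_{t=1}^{τ_b^0} k_{X(t-1)X(t)}, D^k = Σ_{x∼y∈V} μ_x P_{xy} k_{xy} (sum over ordered adjacent pairs), and R^eff_{ab} is the effective resistance of the associated network between a and b. In particular for k ≡ 1, the expected commute time equals R^eff_{ab} · Σ_{x∼y∈V} μ_x P_{xy}. -/

import Mathlib

open Finset

lemma commute_maxprin {V : Type*} [Fintype V] [DecidableEq V]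
    (G : V → V → Prop)
    (hconn : ∀ x y : V, Relation.ReflTransGen G x y)
    (P : V → V → ℝ)
    (hPpos : ∀ x y, G x y → 0 < P x y)
    (hPzero : ∀ x y, ¬ G x y → P x y = 0)
    (hProw : ∀ x, ∑ y, P x y = 1)
    (a b : V) (w : V → ℝ)
    (hw : ∀ x, x ≠ a → x ≠ b → w x = ∑ y, P x y * w y)
    (c : ℝ) (hwa : w a ≤ c) (hwb : w b ≤ c) :
    ∀ x, w x ≤ c := by
  have hPnn : ∀ x y, 0 ≤ P x y := by
    intro x y
    by_cases h : G x y
    · exact (hPpos x y h).le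
    · simp [hPzero x y h]
  obtain ⟨x0, -, hx0⟩ := Finset.exists_max_image (univ : Finset V) w ⟨a, mem_univ a⟩
  set M := w x0 with hM
  have hle : ∀ x, w x ≤ M := fun x => hx0 x (mem_univ x)
  suffices hMc : M ≤ c by intro x; exact le_trans (hle x) hMc
  have key : ∀ x : V, Relation.ReflTransGen G x a → w x = M → M ≤ c := by
    intro x hpath
    induction hpath using Relation.ReflTransGen.head_induction_on with
    | refl => intro hxa; rw [← hxa]; exact hwa
    | head hxy hpath ih =>
      rename_i x y
      intro hx
      by_cases hxa : x = a
      · rw [← hx, hxa]; exact hwa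
      by_cases hxb : x = b
      · rw [← hx, hxb]; exact hwb
      · have hsum : ∑ y', P x y' * (M - w y') = 0 := by
          have h1 : ∑ y', P x y' * (M - w y') = M * (∑ y', P x y') - ∑ y', P x y' * w y' := by
            rw [Finset.mul_sum, ← Finset.sum_sub_distrib]
            congr 1; ext y'; ring
          rw [h1, hProw, ← hw x hxa hxb, hx]; ring
        have hzero := (Finset.sum_eq_zero_iff_of_nonneg
          (fun y' _ => mul_nonneg (hPnn x y') (by linarith [hle y']))).mp hsum
        have h2 := hzero y (mem_univ y)
        have hPy := hPpos x y hxy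
        have : w y = M := by
          rcases mul_eq_zero.mp h2 with h | h
          · exact absurd h (ne_of_gt hPy)
          · linarith
        exact ih this
  exact key x0 (hconn x0 a) rfl

lemma commute_unique {V : Type*} [Fintype V] [DecidableEq V]
    (G : V → V → Prop)
    (hconn : ∀ x y : V, Relation.ReflTransGen G x y)
    (P : V → V → ℝ)
    (hPpos : ∀ x y, G x y → 0 < P x y)
    (hPzero : ∀ x y, ¬ G x y → P x y = 0)
    (hProw : ∀ x, ∑ y, P x y = 1)
    (a b : V) (w : V → ℝ)
    (hw : ∀ x, x ≠ a → x ≠ b → w x = ∑ y, P x y * w y)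
    (hwa : w a = 0) (hwb : w b = 0) :
    ∀ x, w x = 0 := by
  have h1 := commute_maxprin G hconn P hPpos hPzero hProw a b w hw 0 hwa.le hwb.le
  have hw' : ∀ x, x ≠ a → x ≠ b → (fun x => -w x) x = ∑ y, P x y * (fun x => -w x) y := by
    intro x hxa hxb
    simp only
    rw [hw x hxa hxb]
    rw [← Finset.sum_neg_distrib]
    congr 1; ext y; ring
  have h2 := commute_maxprin G hconn P hPpos hPzero hProw a b (fun x => -w x) hw' 0
    (by simp [hwa]) (by simp [hwb])
  intro x
  have := h1 x
  have := h2 x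
  simp only at *
  linarith

/-- the commute cost formula `K^k_{ab} = R^eff_{ab} · D^k`.
The expected costs `H^k_{·b}` and `H^k_{·a}` are characterised by their
first-step equations; `R^eff_{ab}` is the effective resistance of the associated
network between `a` and `b`, characterised by `R^eff_{ab} · i_a = 1` for the
solution with boundary potential 1 at `a` and 0 at `b`;
`D^k = Σ_{x∼y} μ_x P_{xy} k_{xy}`. -/
theorem commute_cost_formula {V : Type*} [Fintype V] [DecidableEq V]
    (G : V → V → Prop) [DecidableRel G]
    (hGsym : ∀ x y, G x y → G y x)
    (hconn : ∀ x y : V, Relation.ReflTransGen G x y)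
    (P : V → V → ℝ) (μ : V → ℝ)
    (hPpos : ∀ x y, G x y → 0 < P x y)
    (hPzero : ∀ x y, ¬ G x y → P x y = 0)
    (hProw : ∀ x, ∑ y, P x y = 1)
    (hμpos : ∀ x, 0 < μ x)
    (hμsum : ∑ x, μ x = 1)
    (hstat : ∀ y, ∑ x, μ x * P x y = μ y)
    (D γ : V → V → ℝ)
    (hD : ∀ x y, D x y = Real.sqrt (μ x * P x y * (μ y * P y x)))
    (hγ : ∀ x y, γ x y = Real.sqrt (μ x * P x y / (μ y * P y x)))
    (a b : V) (hab : a ≠ b)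
    (k : V → V → ℝ)
    -- H x = H^k_{xb}, the expected cost from x until hitting b
    (H : V → ℝ) (hHb : H b = 0)
    (hHstep : ∀ x, x ≠ b → H x = ∑ y, P x y * (k x y + H y))
    -- H' x = H^k_{xa}, the expected cost from x until hitting a
    (H' : V → ℝ) (hH'a : H' a = 0)
    (hH'step : ∀ x, x ≠ a → H' x = ∑ y, P x y * (k x y + H' y))
    -- the network solution with boundary potential 1 at a, 0 at b
    (u : V → ℝ) (i : V → V → ℝ)
    (hohm : ∀ x y, G x y → i x y = D x y * (γ y x * u x - γ x y * u y))
    (hkir : ∀ x, x ≠ a → x ≠ b → ∑ y ∈ univ.filter (fun y => G x y), i x y = 0)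
    (hua : u a = 1) (hub : u b = 0)
    (Reff : ℝ)
    (hReff : Reff * ∑ y ∈ univ.filter (fun y => G a y), i a y = 1) :
    H a + H' b = Reff * ∑ x, ∑ y ∈ univ.filter (fun y => G x y), μ x * P x y * k x y := by
  -- basic facts
  have hPnn : ∀ x y, 0 ≤ P x y := by
    intro x y
    by_cases h : G x y
    · exact (hPpos x y h).le
    · simp [hPzero x y h]
  -- the current formula
  have hi : ∀ x y, G x y → i x y = μ y * P y x * u x - μ x * P x y * u y := by
    intro x y h
    have hA : 0 < μ x * P x y := mul_pos (hμpos x) (hPpos x y h)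
    have hB : 0 < μ y * P y x := mul_pos (hμpos y) (hPpos y x (hGsym x y h))
    have e1 : D x y * γ y x = μ y * P y x := by
      rw [hD, hγ, ← Real.sqrt_mul (by positivity)]
      rw [show μ x * P x y * (μ y * P y x) * (μ y * P y x / (μ x * P x y))
          = (μ y * P y x)^2 by field_simp [(hμpos x).ne', (hPpos x y h).ne']]
      exact Real.sqrt_sq hB.le
    have e2 : D x y * γ x y = μ x * P x y := by
      rw [hD, hγ, ← Real.sqrt_mul (by positivity)]
      rw [show μ x * P x y * (μ y * P y x) * (μ x * P x y / (μ y * P y x))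
          = (μ x * P x y)^2 by field_simp [(hμpos y).ne', (hPpos y x (hGsym x y h)).ne']]
      exact Real.sqrt_sq hA.le
    rw [hohm x y h, mul_sub, ← mul_assoc, ← mul_assoc, e1, e2]
  -- total current out of x
  have hflow : ∀ x, ∑ y ∈ univ.filter (fun y => G x y), i x y
      = μ x * (u x - ∑ y, P x y * u y) := by
    intro x
    have h1 : ∑ y ∈ univ.filter (fun y => G x y), i x y
        = ∑ y, (μ y * P y x * u x - μ x * P x y * u y) := by
      rw [Finset.sum_filter]
      apply Finset.sum_congr rfl
      intro y _
      by_cases h : G x y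
      · simp [h, hi x y h]
      · have hxy := hPzero x y h
        have hyx := hPzero y x (fun hg => h (hGsym y x hg))
        simp [h, hxy, hyx]
    rw [h1, Finset.sum_sub_distrib]
    have h2 : ∑ y, μ y * P y x * u x = μ x * u x := by
      rw [← Finset.sum_mul, hstat x]
    have h3 : ∑ y, μ x * P x y * u y = μ x * ∑ y, P x y * u y := by
      rw [Finset.mul_sum]; congr 1; ext y; ring
    rw [h2, h3]; ring
  -- u is harmonic off {a, b}
  have huharm : ∀ x, x ≠ a → x ≠ b → u x = ∑ y, P x y * u y := by
    intro x hxa hxb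
    have := hkir x hxa hxb
    rw [hflow x] at this
    have hμ := (hμpos x).ne'
    have := mul_eq_zero.mp this
    rcases this with h | h
    · exact absurd h hμ
    · linarith
  -- stationarity: global balance for any f
  have hbal : ∀ f : V → ℝ, ∑ x, μ x * (f x - ∑ y, P x y * f y) = 0 := by
    intro f
    have h1 : ∑ x, μ x * (f x - ∑ y, P x y * f y)
        = ∑ x, μ x * f x - ∑ x, ∑ y, μ x * (P x y * f y) := by
      rw [← Finset.sum_sub_distrib]
      congr 1; ext x
      rw [mul_sub, Finset.mul_sum]
    rw [h1]
    have h2 : ∑ x, ∑ y, μ x * (P x y * f y) = ∑ y, μ y * f y := by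
      rw [Finset.sum_comm]
      congr 1; ext y
      have : ∑ x, μ x * (P x y * f y) = (∑ x, μ x * P x y) * f y := by
        rw [Finset.sum_mul]; congr 1; ext x; ring
      rw [this, hstat y]
    rw [h2]; ring
  -- two-point balance for functions harmonic off {a,b}
  have htwo : ∀ f : V → ℝ, (∀ x, x ≠ a → x ≠ b → f x = ∑ y, P x y * f y) →
      μ a * (f a - ∑ y, P a y * f y) + μ b * (f b - ∑ y, P b y * f y) = 0 := by
    intro f hf
    have h0 := hbal f
    have hsub : ∑ x ∈ ({a, b} : Finset V), μ x * (f x - ∑ y, P x y * f y)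
        = ∑ x, μ x * (f x - ∑ y, P x y * f y) := by
      apply Finset.sum_subset (Finset.subset_univ _)
      intro x _ hx
      simp only [Finset.mem_insert, Finset.mem_singleton, not_or] at hx
      rw [← hf x hx.1 hx.2]
      ring
    rw [← hsub, Finset.sum_pair hab] at h0
    exact h0
  -- rearranged first-step equations
  have hH1 : ∀ x, x ≠ b → H x - ∑ y, P x y * H y = ∑ y, P x y * k x y := by
    intro x hx
    have := hHstep x hx
    rw [show ∑ y, P x y * (k x y + H y) = ∑ y, P x y * k x y + ∑ y, P x y * H y by
      rw [← Finset.sum_add_distrib]; congr 1; ext y; ring] at this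
    linarith
  have hH'1 : ∀ x, x ≠ a → H' x - ∑ y, P x y * H' y = ∑ y, P x y * k x y := by
    intro x hx
    have := hH'step x hx
    rw [show ∑ y, P x y * (k x y + H' y) = ∑ y, P x y * k x y + ∑ y, P x y * H' y by
      rw [← Finset.sum_add_distrib]; congr 1; ext y; ring] at this
    linarith
  set K := H a + H' b with hK
  set F : V → ℝ := fun x => H x + H' b - H' x with hF
  -- key expansion of ∑ P x y * F y
  have hPF : ∀ x, ∑ y, P x y * F y
      = ∑ y, P x y * H y + H' b - ∑ y, P x y * H' y := by
    intro x
    have he : ∀ y, P x y * F y = P x y * H y + P x y * H' b - P x y * H' y := by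
      intro y; simp only [hF]; ring
    rw [Finset.sum_congr rfl (fun y _ => he y), Finset.sum_sub_distrib,
      Finset.sum_add_distrib, ← Finset.sum_mul, hProw, one_mul]
  -- F is harmonic off {a,b}
  have hFharm : ∀ x, x ≠ a → x ≠ b → F x - ∑ y, P x y * F y = 0 := by
    intro x hxa hxb
    have h1 := hH1 x hxb
    have h2 := hH'1 x hxa
    have hFx : F x = H x + H' b - H' x := rfl
    rw [hPF x, hFx]
    linarith
  -- F = K • u by uniqueness of harmonic extension
  have hFu : ∀ x, F x = K * u x := by
    have hw : ∀ x, x ≠ a → x ≠ b →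
        (fun x => F x - K * u x) x = ∑ y, P x y * (fun x => F x - K * u x) y := by
      intro x hxa hxb
      simp only
      have he : ∀ y, P x y * (F y - K * u y) = P x y * F y - K * (P x y * u y) := by
        intro y; ring
      rw [Finset.sum_congr rfl (fun y _ => he y), Finset.sum_sub_distrib,
        ← Finset.mul_sum, ← huharm x hxa hxb]
      have := hFharm x hxa hxb
      linarith
    have hz := commute_unique G hconn P hPpos hPzero hProw a b
      (fun x => F x - K * u x) hw
      (by simp only [hF, hK, hua, hH'a]; ring)
      (by simp only [hF, hK, hub, hHb]; ring)
    intro x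
    have := hz x
    linarith
  -- total cost
  set Dk : ℝ := ∑ x, μ x * ∑ y, P x y * k x y with hDkdef
  -- global balance for H gives the value of ∑ P b y * H y
  have hHbal : μ b * (∑ y, P b y * H y) = Dk - μ b * ∑ y, P b y * k b y := by
    set g : V → ℝ := fun x => μ x * (H x - ∑ y, P x y * H y) - μ x * ∑ y, P x y * k x y
      with hg
    have hgsum : ∑ x, g x = -Dk := by
      simp only [hg]
      rw [Finset.sum_sub_distrib, hbal H, hDkdef]
      ring
    have hgb : ∑ x, g x = g b := by
      rw [← Finset.sum_singleton (f := g) (a := b)]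
      symm
      apply Finset.sum_subset (Finset.subset_univ _)
      intro x _ hx
      simp only [Finset.mem_singleton] at hx
      simp only [hg]
      have := hH1 x hx
      rw [this]; ring
    have : g b = -Dk := by rw [← hgb, hgsum]
    simp only [hg, hHb] at this
    linarith
  -- evaluate the discrete divergence of F at b
  have hFb : μ b * (F b - ∑ y, P b y * F y) = -Dk := by
    rw [hPF b]
    have hFbv : F b = 0 := by simp only [hF, hHb]; ring
    have h2 := hH'1 b (Ne.symm hab)
    rw [hFbv]
    have : μ b * (0 - (∑ y, P b y * H y + H' b - ∑ y, P b y * H' y))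
        = -(μ b * ∑ y, P b y * H y) - μ b * (H' b - ∑ y, P b y * H' y) := by ring
    rw [this, h2, hHbal]
    ring
  -- rewrite via F = K u
  have hKu : K * (μ b * (u b - ∑ y, P b y * u y)) = -Dk := by
    rw [← hFb, hFu b]
    have he : ∀ y, P b y * F y = K * (P b y * u y) := by
      intro y; rw [hFu y]; ring
    rw [Finset.sum_congr rfl (fun y _ => he y), ← Finset.mul_sum]
    ring
  -- two-point balance for u, and the total current out of a
  have huu := htwo u huharm
  set I : ℝ := ∑ y ∈ univ.filter (fun y => G a y), i a y with hI
  have hIa : I = μ a * (u a - ∑ y, P a y * u y) := hflow a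
  have hKI : K * I = Dk := by
    have : μ b * (u b - ∑ y, P b y * u y) = -I := by rw [hIa]; linarith
    rw [this] at hKu
    linarith
  -- identify the right-hand sum with Dk
  have hRHS : ∑ x, ∑ y ∈ univ.filter (fun y => G x y), μ x * P x y * k x y = Dk := by
    rw [hDkdef]
    apply Finset.sum_congr rfl
    intro x _
    rw [show μ x * ∑ y, P x y * k x y = ∑ y, μ x * P x y * k x y by
      rw [Finset.mul_sum]; congr 1; ext y; ring]
    apply Finset.sum_subset (Finset.filter_subset _ _)
    intro y _ hy
    simp only [Finset.mem_filter, Finset.mem_univ, true_and] at hy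
    rw [hPzero x y hy]
    ring
  rw [hRHS]
  linear_combination Reff * hKI - K * hReff
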